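/- arXiv:2110.01943 — 3 statements merged into one kernel-verified Lean document; each statement's English description precedes it below -/
import Mathlib

section
/- For any constant c ∈ (0,1), the infimum over all real z > 1 of (z − z^c)/(z − z^{−c}) equals (1 − c)/(1 + c). -/
open Real Filter Set Topology

theorem stmt_0 (c : ℝ) (hc : c ∈ Set.Ioo (0:ℝ) 1) :
    IsGLB ((fun z : ℝ => (z - z ^ c) / (z - z ^ (-c))) '' Set.Ioi 1)
      ((1 - c) / (1 + c)) := by
  obtain ⟨hc0, hc1⟩ := hc
  have h1c : (0:ℝ) < 1 + c := by linarith
  -- pointwise lower bound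
  have key : ∀ z ∈ Set.Ioi (1:ℝ), (1 - c) / (1 + c) ≤ (z - z ^ c) / (z - z ^ (-c)) := by
    intro z hz
    have hz1 : (1:ℝ) < z := hz
    have hz0 : (0:ℝ) < z := by linarith
    have hneg : z ^ (-c) < 1 := Real.rpow_lt_one_of_one_lt_of_neg hz1 (by linarith)
    have hden : 0 < z - z ^ (-c) := by linarith
    have hzc : 0 < z ^ c := Real.rpow_pos_of_pos hz0 c
    rw [div_le_div_iff₀ h1c hden]
    have amgm := Real.geom_mean_le_arith_mean2_weighted
      (w₁ := 2*c/(1+c)) (w₂ := (1-c)/(1+c)) (p₁ := z ^ (1+c)) (p₂ := 1)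
      (by positivity) (div_nonneg (by linarith) h1c.le)
      (le_of_lt (Real.rpow_pos_of_pos hz0 _)) zero_le_one (by field_simp; ring)
    have hpow : (z ^ (1+c)) ^ (2*c/(1+c)) = z ^ (2*c) := by
      rw [← Real.rpow_mul hz0.le]
      congr 1
      field_simp
    rw [hpow, Real.one_rpow] at amgm
    simp only [mul_one] at amgm
    have amgm' : (1+c) * z ^ (2*c) ≤ 2*c * z ^ (1+c) + (1-c) := by
      have := mul_le_mul_of_nonneg_left amgm h1c.le
      calc (1+c) * z ^ (2*c) ≤ (1+c) * (2*c/(1+c) * z ^ (1+c) + (1-c)/(1+c)) := this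
        _ = 2*c * z ^ (1+c) + (1-c) := by field_simp
    have e1 : z * z ^ c = z ^ (1+c) := by
      rw [Real.rpow_add hz0, Real.rpow_one]
    have e2 : z ^ (-c) * z ^ c = 1 := by
      rw [← Real.rpow_add hz0]; simp
    have e3 : z ^ c * z ^ c = z ^ (2*c) := by
      rw [← Real.rpow_add hz0]; ring_nf
    have hmul : (1-c) * (z - z ^ (-c)) * z ^ c ≤ (z - z ^ c) * (1+c) * z ^ c := by
      nlinarith [e1, e2, e3, amgm']
    exact le_of_mul_le_mul_right hmul hzc
  -- limit at 1⁺
  have hu : HasDerivAt (fun z : ℝ => z - z ^ c) (1 - c) 1 := by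
    have h := Real.hasDerivAt_rpow_const (x := (1:ℝ)) (p := c) (Or.inl one_ne_zero)
    simpa using (hasDerivAt_id (1:ℝ)).fun_sub h
  have hv : HasDerivAt (fun z : ℝ => z - z ^ (-c)) (1 + c) 1 := by
    have h := Real.hasDerivAt_rpow_const (x := (1:ℝ)) (p := -c) (Or.inl one_ne_zero)
    have := (hasDerivAt_id (1:ℝ)).fun_sub h
    simpa [sub_neg_eq_add] using this
  have hus := hasDerivAt_iff_tendsto_slope.mp hu
  have hvs := hasDerivAt_iff_tendsto_slope.mp hv
  have hdiv := hus.div hvs (ne_of_gt h1c)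
  have hmono : 𝓝[>] (1:ℝ) ≤ 𝓝[≠] (1:ℝ) :=
    nhdsWithin_mono _ (fun x hx => ne_of_gt hx)
  have htend : Filter.Tendsto (fun z : ℝ => (z - z ^ c) / (z - z ^ (-c))) (𝓝[>] 1)
      (𝓝 ((1 - c) / (1 + c))) := by
    apply (hdiv.mono_left hmono).congr'
    filter_upwards [self_mem_nhdsWithin] with z hz
    have hz1 : (1:ℝ) < z := hz
    have hzne : z - 1 ≠ 0 := sub_ne_zero.mpr (ne_of_gt hz1)
    simp only [Pi.div_apply]
    rw [slope_def_field, slope_def_field]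
    simp only [Real.one_rpow, sub_self, sub_zero]
    rw [div_div_div_cancel_right₀ hzne]
  constructor
  · rintro x ⟨z, hz, rfl⟩
    exact key z hz
  · intro b hb
    refine ge_of_tendsto htend ?_
    filter_upwards [self_mem_nhdsWithin] with z hz
    exact hb ⟨z, hz, rfl⟩
end

section
/- For any constant c ∈ (0,1), the supremum over all real z > 1 of (z − z^{−c})/(z − z^c) equals (1 + c)/(1 − c). -/
open Real Set Filter Topology

theorem stmt_1 (c : ℝ) (hc : c ∈ Set.Ioo (0:ℝ) 1) :
    IsLUB ((fun z : ℝ => (z - z ^ (-c)) / (z - z ^ c)) '' Set.Ioi 1)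
      ((1 + c) / (1 - c)) := by
  obtain ⟨hc0, hc1⟩ := hc
  have h1c : (0:ℝ) < 1 - c := by linarith
  have h1c' : (0:ℝ) < 1 + c := by linarith
  have hden : ∀ z : ℝ, 1 < z → 0 < z - z ^ c := by
    intro z hz
    have h : z ^ c < z ^ (1:ℝ) := (Real.rpow_lt_rpow_left_iff hz).mpr hc1
    rw [Real.rpow_one] at h
    linarith
  have hub : ∀ z : ℝ, 1 < z → (z - z ^ (-c)) / (z - z ^ c) ≤ (1 + c) / (1 - c) := by
    intro z hz
    have hz0 : (0:ℝ) < z := by linarith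
    have hd := hden z hz
    rw [div_le_div_iff₀ hd h1c]
    have hamgm := Real.geom_mean_le_arith_mean2_weighted
      (w₁ := 2*c/(1+c)) (w₂ := (1-c)/(1+c)) (p₁ := z) (p₂ := z ^ (-c))
      (by positivity) (by positivity) hz0.le (Real.rpow_nonneg hz0.le _)
      (by field_simp; ring)
    have e1 : z ^ (2*c/(1+c)) * (z ^ (-c)) ^ ((1-c)/(1+c)) = z ^ c := by
      rw [← Real.rpow_mul hz0.le, ← Real.rpow_add hz0]
      congr 1
      field_simp
      ring
    rw [e1] at hamgm
    have key : (1 + c) * z ^ c ≤ 2*c*z + (1 - c) * z ^ (-c) := by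
      have h2 := mul_le_mul_of_nonneg_left hamgm h1c'.le
      calc (1 + c) * z ^ c ≤ (1+c) * (2*c/(1+c) * z + (1-c)/(1+c) * z ^ (-c)) := h2
        _ = 2*c*z + (1 - c) * z ^ (-c) := by field_simp
    nlinarith [key]
  -- the limit as z → 1⁺
  have hlim : Tendsto (fun z : ℝ => (z - z ^ (-c)) / (z - z ^ c)) (𝓝[>] (1:ℝ))
      (𝓝 ((1 + c) / (1 - c))) := by
    have hmem : Ioi (1:ℝ) ∈ 𝓝[>] (1:ℝ) := self_mem_nhdsWithin
    apply HasDerivAt.lhopital_zero_nhdsGT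
      (f' := fun z : ℝ => 1 + c * z ^ (-c - 1)) (g' := fun z : ℝ => 1 - c * z ^ (c - 1))
    · filter_upwards [hmem] with z hz
      have hz0 : z ≠ 0 := by simp only [mem_Ioi] at hz; intro h; rw [h] at hz; linarith
      have h1 := (Real.hasDerivAt_rpow_const (p := -c) (Or.inl hz0))
      have h2 := (hasDerivAt_id z).sub h1
      exact h2.congr_deriv (by ring)
    · filter_upwards [hmem] with z hz
      have hz0 : z ≠ 0 := by simp only [mem_Ioi] at hz; intro h; rw [h] at hz; linarith
      have h1 := (Real.hasDerivAt_rpow_const (p := c) (Or.inl hz0))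
      have h2 := (hasDerivAt_id z).sub h1
      exact h2
    · filter_upwards [hmem] with z hz
      simp only [mem_Ioi] at hz
      have h : z ^ (c - 1) < 1 := Real.rpow_lt_one_of_one_lt_of_neg hz (by linarith)
      have h0 : 0 < z ^ (c - 1) := Real.rpow_pos_of_pos (by linarith) _
      have : c * z ^ (c - 1) < 1 := by nlinarith
      intro hcon
      linarith [hcon]
    · have hcont : ContinuousAt (fun z : ℝ => z - z ^ (-c)) 1 := by
        apply ContinuousAt.sub continuousAt_id
        exact Real.continuousAt_rpow_const 1 (-c) (Or.inl one_ne_zero)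
      have := hcont.tendsto
      rw [show (1:ℝ) - (1:ℝ) ^ (-c) = 0 by rw [Real.one_rpow]; ring] at this
      exact this.mono_left nhdsWithin_le_nhds
    · have hcont : ContinuousAt (fun z : ℝ => z - z ^ c) 1 := by
        apply ContinuousAt.sub continuousAt_id
        exact Real.continuousAt_rpow_const 1 c (Or.inl one_ne_zero)
      have := hcont.tendsto
      rw [show (1:ℝ) - (1:ℝ) ^ c = 0 by rw [Real.one_rpow]; ring] at this
      exact this.mono_left nhdsWithin_le_nhds
    · have hcont : ContinuousAt
          (fun z : ℝ => (1 + c * z ^ (-c - 1)) / (1 - c * z ^ (c - 1))) 1 := by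
        apply ContinuousAt.div
        · exact continuousAt_const.add (continuousAt_const.mul
            (Real.continuousAt_rpow_const 1 (-c - 1) (Or.inl one_ne_zero)))
        · exact continuousAt_const.sub (continuousAt_const.mul
            (Real.continuousAt_rpow_const 1 (c - 1) (Or.inl one_ne_zero)))
        · rw [Real.one_rpow]; intro h; linarith
      have := hcont.tendsto
      rw [show (1 + c * (1:ℝ) ^ (-c - 1)) / (1 - c * (1:ℝ) ^ (c - 1)) = (1 + c) / (1 - c) by
        rw [Real.one_rpow, Real.one_rpow]; ring_nf] at this
      exact this.mono_left nhdsWithin_le_nhds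
  constructor
  · rintro x ⟨z, hz, rfl⟩
    exact hub z hz
  · intro b hb
    refine le_of_tendsto hlim ?_
    filter_upwards [self_mem_nhdsWithin] with z hz
    exact hb ⟨z, hz, rfl⟩
end

section
/- Let E₁, E₂ be real vector spaces, C₁ ⊂ E₁ and C₂ ⊂ E₂ convex cones with Hilbert projective metrics d_{C₁}, d_{C₂}, and L : E₁ → E₂ a linear operator with L(C₁) ⊂ C₂. If D := sup{d_{C₂}(L v₁, L v₂) : v₁, v₂ ∈ C₁} < ∞, then for all v₁, v₂ ∈ C₁ with d_{C₁}(v₁,v₂) < ∞, d_{C₂}(L v₁, L v₂) ≤ (1 − e^{−D}) · d_{C₁}(v₁, v₂). -/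
open Filter Classical

/-- The Hilbert projective (pseudo-)distance of a convex cone, with value `⊤`
when `α(v,w) = 0` or `β(v,w) = ∞`. -/

noncomputable def coneDist {E : Type*} [AddCommGroup E] [Module ℝ E]
    (C : Set E) (v w : E) : EReal :=
  if ({t : ℝ | 0 < t ∧ w - t • v ∈ C}.Nonempty ∧
      {s : ℝ | 0 < s ∧ s • v - w ∈ C}.Nonempty ∧
      BddAbove {t : ℝ | 0 < t ∧ w - t • v ∈ C}) then
    ((Real.log (sInf {s : ℝ | 0 < s ∧ s • v - w ∈ C} /
        sSup {t : ℝ | 0 < t ∧ w - t • v ∈ C}) : ℝ) : EReal)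
  else ⊤

section Aux
variable {E : Type*} [AddCommGroup E] [Module ℝ E] {C : Set E}

lemma cone_eq_zero
    (h1 : ∀ v ∈ C, ∀ t : ℝ, 0 < t → t • v ∈ C)
    (h3 : ∀ w : E,
      (∃ v ∈ C, ∃ t : ℕ → ℝ, (∀ n, 0 < t n) ∧ Tendsto t atTop (nhds 0) ∧
        ∀ n, w + t n • v ∈ C) →
      (∃ v ∈ C, ∃ t : ℕ → ℝ, (∀ n, 0 < t n) ∧ Tendsto t atTop (nhds 0) ∧
        ∀ n, -w + t n • v ∈ C) →
      w = 0)
    {v : E} (hv : v ∈ C) {c : ℝ} (hc : 0 < c) (hneg : (-c) • v ∈ C) : v = 0 := by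
  apply h3 v
  · refine ⟨v, hv, fun n => 1/((n:ℝ)+1), fun n => by positivity,
      tendsto_one_div_add_atTop_nhds_zero_nat, fun n => ?_⟩
    have h : v + (1/((n:ℝ)+1)) • v = (1 + 1/((n:ℝ)+1)) • v := by module
    rw [h]
    exact h1 v hv _ (by positivity)
  · refine ⟨(-c) • v, hneg, fun n => 1/((n:ℝ)+1), fun n => by positivity,
      tendsto_one_div_add_atTop_nhds_zero_nat, fun n => ?_⟩
    have h : -v + (1/((n:ℝ)+1)) • ((-c) • v) = ((1 + c/((n:ℝ)+1))/c) • ((-c) • v) := by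
      match_scalars
      field_simp
      ring
    rw [h]
    exact h1 _ hneg _ (by positivity)

lemma sep_le
    (h1 : ∀ v ∈ C, ∀ t : ℝ, 0 < t → t • v ∈ C)
    (h2 : ∀ v₁ ∈ C, ∀ v₂ ∈ C, ∀ t₁ t₂ : ℝ, 0 < t₁ → 0 < t₂ → t₁ • v₁ + t₂ • v₂ ∈ C)
    (h3 : ∀ w : E,
      (∃ v ∈ C, ∃ t : ℕ → ℝ, (∀ n, 0 < t n) ∧ Tendsto t atTop (nhds 0) ∧
        ∀ n, w + t n • v ∈ C) →
      (∃ v ∈ C, ∃ t : ℕ → ℝ, (∀ n, 0 < t n) ∧ Tendsto t atTop (nhds 0) ∧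
        ∀ n, -w + t n • v ∈ C) →
      w = 0)
    {v w : E} (hv : v ∈ C) (hw : w ∈ C)
    (hbdd : BddAbove {t : ℝ | 0 < t ∧ w - t • v ∈ C})
    {t s : ℝ} (ht : t ∈ {t : ℝ | 0 < t ∧ w - t • v ∈ C})
    (hs : s ∈ {s : ℝ | 0 < s ∧ s • v - w ∈ C}) :
    t ≤ s := by
  by_contra hts
  push_neg at hts
  have hsum := h2 _ ht.2 _ hs.2 1 1 one_pos one_pos
  have heq : (1:ℝ) • (w - t • v) + (1:ℝ) • (s • v - w) = (-(t - s)) • v := by module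
  rw [heq] at hsum
  have hv0 : v = 0 := cone_eq_zero h1 h3 hv (by linarith) hsum
  obtain ⟨b, hb⟩ := hbdd
  have hmem : max b 0 + 1 ∈ {t : ℝ | 0 < t ∧ w - t • v ∈ C} := by
    refine ⟨by positivity, ?_⟩
    rw [hv0]
    simpa using hw
  have h1' := hb hmem
  have h2' : b < max b 0 + 1 := lt_of_le_of_lt (le_max_left _ _) (lt_add_one _)
  linarith

lemma S_up
    (h2 : ∀ v₁ ∈ C, ∀ v₂ ∈ C, ∀ t₁ t₂ : ℝ, 0 < t₁ → 0 < t₂ → t₁ • v₁ + t₂ • v₂ ∈ C)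
    {v w : E} (hv : v ∈ C) {s s' : ℝ}
    (hs : s ∈ {s : ℝ | 0 < s ∧ s • v - w ∈ C}) (h : s < s') :
    s' ∈ {s : ℝ | 0 < s ∧ s • v - w ∈ C} := by
  refine ⟨lt_trans hs.1 h, ?_⟩
  have hsum := h2 _ hs.2 _ hv 1 (s' - s) one_pos (by linarith)
  have heq : (1:ℝ) • (s • v - w) + (s' - s) • v = s' • v - w := by module
  rwa [heq] at hsum

lemma T_down
    (h2 : ∀ v₁ ∈ C, ∀ v₂ ∈ C, ∀ t₁ t₂ : ℝ, 0 < t₁ → 0 < t₂ → t₁ • v₁ + t₂ • v₂ ∈ C)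
    {v w : E} (hv : v ∈ C) {t t' : ℝ}
    (ht : t ∈ {t : ℝ | 0 < t ∧ w - t • v ∈ C}) (h0 : 0 < t') (h : t' < t) :
    t' ∈ {t : ℝ | 0 < t ∧ w - t • v ∈ C} := by
  refine ⟨h0, ?_⟩
  have hsum := h2 _ ht.2 _ hv 1 (t - t') one_pos (by linarith)
  have heq : (1:ℝ) • (w - t • v) + (t - t') • v = w - t' • v := by module
  rwa [heq] at hsum

end Aux

private lemma key_ineq {t s τ σ : ℝ} (ht : 0 < t) (hts : t < s) (hτ : 0 < τ) (hτσ : τ ≤ σ) :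
    Real.log ((s + t*τ)/(1+τ)) - Real.log ((s + t*σ)/(1+σ)) ≤ (1 - τ/σ) * Real.log (s/t) := by
  have hσ : 0 < σ := lt_of_lt_of_le hτ hτσ
  have hs : 0 < s := ht.trans hts
  set l := s / t with hl
  have hl1 : 1 < l := (one_lt_div ht).2 hts
  have hl0 : 0 < l := lt_trans one_pos hl1
  set f : ℝ → ℝ := fun x => (1 - τ/σ) * Real.log x - Real.log (x + τ) + Real.log (x + σ) with hf
  have hderiv : ∀ x : ℝ, 0 < x →
      HasDerivAt f ((1 - τ/σ) * x⁻¹ - (x+τ)⁻¹ + (x+σ)⁻¹) x := by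
    intro x hx
    have d1 : HasDerivAt (fun x : ℝ => Real.log x) x⁻¹ x := Real.hasDerivAt_log hx.ne'
    have d2 : HasDerivAt (fun x : ℝ => Real.log (x + τ)) (x+τ)⁻¹ x := by
      have := (Real.hasDerivAt_log (show x+τ ≠ 0 by positivity)).comp x
        ((hasDerivAt_id x).add_const τ)
      simpa [Function.comp_def] using this
    have d3 : HasDerivAt (fun x : ℝ => Real.log (x + σ)) (x+σ)⁻¹ x := by
      have := (Real.hasDerivAt_log (show x+σ ≠ 0 by positivity)).comp x
        ((hasDerivAt_id x).add_const σ)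
      simpa [Function.comp_def] using this
    exact ((d1.const_mul (1 - τ/σ)).sub d2).add d3
  have hmono : MonotoneOn f (Set.Ici (1:ℝ)) := by
    apply monotoneOn_of_deriv_nonneg (convex_Ici 1)
    · intro x hx
      exact (hderiv x (lt_of_lt_of_le one_pos hx)).continuousAt.continuousWithinAt
    · intro x hx
      rw [interior_Ici] at hx
      exact (hderiv x (lt_trans one_pos hx)).differentiableAt.differentiableWithinAt
    · intro x hx
      rw [interior_Ici] at hx
      have hx0 : 0 < x := lt_trans one_pos hx
      rw [(hderiv x hx0).deriv]
      have heq : (1 - τ/σ) * x⁻¹ - (x+τ)⁻¹ + (x+σ)⁻¹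
          = ((σ - τ) * (x*x + τ*x + τ*σ)) / (σ*x*(x+τ)*(x+σ)) := by
        field_simp
        ring
      rw [heq]
      apply div_nonneg
      · exact mul_nonneg (by linarith) (by positivity)
      · positivity
  have hfl := hmono Set.self_mem_Ici (Set.mem_Ici.mpr hl1.le) hl1.le
  have e1 : Real.log ((s + t*τ)/(1+τ)) = Real.log t + Real.log (l + τ) - Real.log (1 + τ) := by
    have : (s + t*τ)/(1+τ) = t * (l + τ) / (1 + τ) := by
      rw [hl]; field_simp
    rw [this, Real.log_div (by positivity) (by positivity), Real.log_mul ht.ne' (by positivity)]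
  have e2 : Real.log ((s + t*σ)/(1+σ)) = Real.log t + Real.log (l + σ) - Real.log (1 + σ) := by
    have : (s + t*σ)/(1+σ) = t * (l + σ) / (1 + σ) := by
      rw [hl]; field_simp
    rw [this, Real.log_div (by positivity) (by positivity), Real.log_mul ht.ne' (by positivity)]
  have hf1 : f 1 = - Real.log (1 + τ) + Real.log (1 + σ) := by
    simp [hf]
  have hfl' : f l = (1 - τ/σ) * Real.log l - Real.log (l + τ) + Real.log (l + σ) := rfl
  rw [hf1, hfl'] at hfl
  rw [e1, e2]
  linarith

/-- Birkhoff's inequality. -/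
theorem stmt_17 {E₁ E₂ : Type*} [AddCommGroup E₁] [Module ℝ E₁]
    [AddCommGroup E₂] [Module ℝ E₂] (C₁ : Set E₁) (C₂ : Set E₂)
    (h1₁ : ∀ v ∈ C₁, ∀ t : ℝ, 0 < t → t • v ∈ C₁)
    (h2₁ : ∀ v₁ ∈ C₁, ∀ v₂ ∈ C₁, ∀ t₁ t₂ : ℝ, 0 < t₁ → 0 < t₂ → t₁ • v₁ + t₂ • v₂ ∈ C₁)
    (h3₁ : ∀ w : E₁,
      (∃ v ∈ C₁, ∃ t : ℕ → ℝ, (∀ n, 0 < t n) ∧ Tendsto t atTop (nhds 0) ∧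
        ∀ n, w + t n • v ∈ C₁) →
      (∃ v ∈ C₁, ∃ t : ℕ → ℝ, (∀ n, 0 < t n) ∧ Tendsto t atTop (nhds 0) ∧
        ∀ n, -w + t n • v ∈ C₁) →
      w = 0)
    (h1₂ : ∀ v ∈ C₂, ∀ t : ℝ, 0 < t → t • v ∈ C₂)
    (h2₂ : ∀ v₁ ∈ C₂, ∀ v₂ ∈ C₂, ∀ t₁ t₂ : ℝ, 0 < t₁ → 0 < t₂ → t₁ • v₁ + t₂ • v₂ ∈ C₂)
    (h3₂ : ∀ w : E₂,
      (∃ v ∈ C₂, ∃ t : ℕ → ℝ, (∀ n, 0 < t n) ∧ Tendsto t atTop (nhds 0) ∧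
        ∀ n, w + t n • v ∈ C₂) →
      (∃ v ∈ C₂, ∃ t : ℕ → ℝ, (∀ n, 0 < t n) ∧ Tendsto t atTop (nhds 0) ∧
        ∀ n, -w + t n • v ∈ C₂) →
      w = 0)
    (L : E₁ →ₗ[ℝ] E₂) (hL : ∀ v ∈ C₁, L v ∈ C₂)
    (D : ℝ)
    (hD : ∀ v₁ ∈ C₁, ∀ v₂ ∈ C₁, coneDist C₂ (L v₁) (L v₂) ≤ (D : EReal)) :
    ∀ v₁ ∈ C₁, ∀ v₂ ∈ C₁, ∀ r : ℝ, coneDist C₁ v₁ v₂ = (r : EReal) →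
      coneDist C₂ (L v₁) (L v₂) ≤ (((1 - Real.exp (-D)) * r : ℝ) : EReal) := by
  intro v₁ hv₁ v₂ hv₂ r hr
  unfold coneDist at hr
  split_ifs at hr with hc₁
  swap
  · exact absurd hr (by simp)
  obtain ⟨hT₁ne, hS₁ne, hT₁bdd⟩ := hc₁
  set T₁ := {t : ℝ | 0 < t ∧ v₂ - t • v₁ ∈ C₁} with hT₁def
  set S₁ := {s : ℝ | 0 < s ∧ s • v₁ - v₂ ∈ C₁} with hS₁def
  have hr' : Real.log (sInf S₁ / sSup T₁) = r := by exact_mod_cast hr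
  have hgoal := hD v₁ hv₁ v₂ hv₂
  unfold coneDist at hgoal ⊢
  split_ifs at hgoal ⊢ with hc₂
  swap
  · exact absurd hgoal (EReal.coe_lt_top D).not_ge
  obtain ⟨hT₂ne, hS₂ne, hT₂bdd⟩ := hc₂
  set T₂ := {x : ℝ | 0 < x ∧ L v₂ - x • L v₁ ∈ C₂} with hT₂def
  set S₂ := {x : ℝ | 0 < x ∧ x • L v₁ - L v₂ ∈ C₂} with hS₂def
  rw [EReal.coe_le_coe_iff]
  set d₂ := Real.log (sInf S₂ / sSup T₂) with hd₂def
  -- basic facts about T₁, S₁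
  obtain ⟨t₀, ht₀⟩ := hT₁ne
  have hα0 : 0 < sSup T₁ := lt_of_lt_of_le ht₀.1 (le_csSup hT₁bdd ht₀)
  have hαβ : sSup T₁ ≤ sInf S₁ :=
    csSup_le ⟨t₀, ht₀⟩ fun a ha => le_csInf hS₁ne fun b hb =>
      sep_le h1₁ h2₁ h3₁ hv₁ hv₂ hT₁bdd ha hb
  have hβ0 : 0 < sInf S₁ := lt_of_lt_of_le hα0 hαβ
  -- step 1
  have step1 : ∀ t ∈ T₁, ∀ s ∈ S₁, t < s → d₂ ≤ (1 - Real.exp (-D)) * Real.log (s / t) := by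
    intro t ht s hs hts
    have ht0 : 0 < t := ht.1
    have hs0 : 0 < s := hs.1
    have hu' : v₂ - t • v₁ ∈ C₁ := ht.2
    have hw' : s • v₁ - v₂ ∈ C₁ := hs.2
    have hLu : L (v₂ - t • v₁) ∈ C₂ := hL _ hu'
    have hLw : L (s • v₁ - v₂) ∈ C₂ := hL _ hw'
    have hduw := hD _ hu' _ hw'
    unfold coneDist at hduw
    split_ifs at hduw with hcuw
    swap
    · exact absurd hduw (EReal.coe_lt_top D).not_ge
    obtain ⟨hTune, hSune, hTubdd⟩ := hcuw
    set Tu := {x : ℝ | 0 < x ∧ L (s • v₁ - v₂) - x • L (v₂ - t • v₁) ∈ C₂} with hTudef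
    set Su := {x : ℝ | 0 < x ∧ x • L (v₂ - t • v₁) - L (s • v₁ - v₂) ∈ C₂} with hSudef
    have hduw' : Real.log (sInf Su / sSup Tu) ≤ D := by exact_mod_cast hduw
    obtain ⟨τ₀, hτ₀⟩ := hTune
    have hm0 : 0 < sSup Tu := lt_of_lt_of_le hτ₀.1 (le_csSup hTubdd hτ₀)
    have hmM : sSup Tu ≤ sInf Su :=
      csSup_le ⟨τ₀, hτ₀⟩ fun a ha => le_csInf hSune fun b hb =>
        sep_le h1₂ h2₂ h3₂ hLu hLw hTubdd ha hb
    have hM0 : 0 < sInf Su := lt_of_lt_of_le hm0 hmM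
    have hexp : Real.exp (-D) ≤ sSup Tu / sInf Su := by
      have hlogneg : Real.log (sInf Su / sSup Tu) = - Real.log (sSup Tu / sInf Su) := by
        rw [← Real.log_inv, inv_div]
      have h1 : -D ≤ Real.log (sSup Tu / sInf Su) := by
        rw [hlogneg] at hduw'; linarith
      calc Real.exp (-D) ≤ Real.exp (Real.log (sSup Tu / sInf Su)) := Real.exp_le_exp.2 h1
        _ = sSup Tu / sInf Su := Real.exp_log (div_pos hm0 hM0)
    have hlogst : 0 ≤ Real.log (s / t) := Real.log_nonneg ((one_le_div ht0).2 hts.le)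
    -- step 1a
    have step1a : ∀ τ σ : ℝ, 0 < τ → τ < sSup Tu → sInf Su < σ →
        d₂ ≤ (1 - τ / σ) * Real.log (s / t) := by
      intro τ σ hτ0 hτm hMσ
      have hτσ : τ < σ := hτm.trans (lt_of_le_of_lt hmM hMσ)
      have hσ0 : 0 < σ := hτ0.trans hτσ
      have hτTu : τ ∈ Tu := by
        obtain ⟨τ₁, hτ₁, hττ₁⟩ := exists_lt_of_lt_csSup ⟨τ₀, hτ₀⟩ hτm
        exact T_down h2₂ hLu hτ₁ hτ0 hττ₁
      have hσSu : σ ∈ Su := by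
        obtain ⟨σ₁, hσ₁, hσ₁σ⟩ := exists_lt_of_csInf_lt hSune hMσ
        exact S_up h2₂ hLu hσ₁ hσ₁σ
      have hmem1 : (s + t*σ)/(1+σ) ∈ T₂ := by
        refine ⟨by positivity, ?_⟩
        have heq : L v₂ - ((s + t*σ)/(1+σ)) • L v₁
            = ((1+σ)⁻¹) • (σ • L (v₂ - t • v₁) - L (s • v₁ - v₂)) := by
          simp only [map_sub, map_smul]
          match_scalars <;> field_simp <;> ring
        rw [heq]
        exact h1₂ _ hσSu.2 _ (by positivity)
      have hmem2 : (s + t*τ)/(1+τ) ∈ S₂ := by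
        refine ⟨by positivity, ?_⟩
        have heq : ((s + t*τ)/(1+τ)) • L v₁ - L v₂
            = ((1+τ)⁻¹) • (L (s • v₁ - v₂) - τ • L (v₂ - t • v₁)) := by
          simp only [map_sub, map_smul]
          match_scalars <;> field_simp <;> ring
        rw [heq]
        exact h1₂ _ hτTu.2 _ (by positivity)
      have hb1 : (s + t*σ)/(1+σ) ≤ sSup T₂ := le_csSup hT₂bdd hmem1
      have hb2 : sInf S₂ ≤ (s + t*τ)/(1+τ) := csInf_le ⟨0, fun x hx => hx.1.le⟩ hmem2
      have hb3 : (s + t*σ)/(1+σ) ≤ sInf S₂ := le_csInf hS₂ne fun x hx =>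
        sep_le h1₂ h2₂ h3₂ (hL v₁ hv₁) (hL v₂ hv₂) hT₂bdd hmem1 hx
      have hpos1 : 0 < (s + t*σ)/(1+σ) := by positivity
      have hpos2 : 0 < (s + t*τ)/(1+τ) := by positivity
      have hST2 : 0 < sSup T₂ := lt_of_lt_of_le hpos1 hb1
      have hSI2 : 0 < sInf S₂ := lt_of_lt_of_le hpos1 hb3
      have hlog : d₂ ≤ Real.log (((s + t*τ)/(1+τ)) / ((s + t*σ)/(1+σ))) := by
        apply Real.log_le_log (div_pos hSI2 hST2)
        exact div_le_div₀ hpos2.le hb2 hpos1 hb1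
      rw [Real.log_div hpos2.ne' hpos1.ne'] at hlog
      have hkey := key_ineq ht0 hts hτ0 hτσ.le
      linarith
    -- limit over τ → sSup Tu, σ → sInf Su
    have htend : Tendsto (fun n : ℕ =>
        (1 - (sSup Tu - sSup Tu / ((n:ℝ)+2)) / (sInf Su + 1 / ((n:ℝ)+1))) * Real.log (s/t))
        atTop (nhds ((1 - sSup Tu / sInf Su) * Real.log (s/t))) := by
      have h2n : Tendsto (fun n : ℕ => ((n:ℝ)+2)) atTop atTop :=
        tendsto_atTop_add_const_right _ 2 tendsto_natCast_atTop_atTop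
      have h1n : Tendsto (fun n : ℕ => ((n:ℝ)+1)) atTop atTop :=
        tendsto_atTop_add_const_right _ 1 tendsto_natCast_atTop_atTop
      have ha : Tendsto (fun n : ℕ => sSup Tu - sSup Tu / ((n:ℝ)+2)) atTop (nhds (sSup Tu)) := by
        have := tendsto_const_nhds (x := sSup Tu) (f := atTop (α := ℕ))
        have h0 := Tendsto.div_atTop (this) h2n
        simpa using this.sub h0
      have hb : Tendsto (fun n : ℕ => sInf Su + 1 / ((n:ℝ)+1)) atTop (nhds (sInf Su)) := by
        have h0 := Tendsto.div_atTop (tendsto_const_nhds (x := (1:ℝ)) (f := atTop (α := ℕ))) h1n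
        simpa using (tendsto_const_nhds (x := sInf Su) (f := atTop (α := ℕ))).add h0
      have := ((tendsto_const_nhds (x := (1:ℝ)) (f := atTop (α := ℕ))).sub
        (ha.div hb hM0.ne')).mul_const (Real.log (s/t))
      simpa using this
    have hlim : d₂ ≤ (1 - sSup Tu / sInf Su) * Real.log (s/t) := by
      refine ge_of_tendsto htend (Eventually.of_forall fun n => ?_)
      have hn2 : (1:ℝ) < (n:ℝ)+2 := by
        have := Nat.cast_nonneg (α := ℝ) n; linarith
      apply step1a
      · have : sSup Tu / ((n:ℝ)+2) < sSup Tu := div_lt_self hm0 hn2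
        linarith
      · have : 0 < sSup Tu / ((n:ℝ)+2) := by positivity
        linarith
      · have : 0 < 1 / ((n:ℝ)+1) := by positivity
        linarith
    calc d₂ ≤ (1 - sSup Tu / sInf Su) * Real.log (s/t) := hlim
      _ ≤ (1 - Real.exp (-D)) * Real.log (s/t) := by
          apply mul_le_mul_of_nonneg_right _ hlogst
          linarith
  -- step 2 : limit over t → sSup T₁, s → sInf S₁
  have htend₂ : Tendsto (fun n : ℕ => (1 - Real.exp (-D)) *
      Real.log ((sInf S₁ + 1 / ((n:ℝ)+1)) / (sSup T₁ - sSup T₁ / ((n:ℝ)+2))))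
      atTop (nhds ((1 - Real.exp (-D)) * Real.log (sInf S₁ / sSup T₁))) := by
    have h2n : Tendsto (fun n : ℕ => ((n:ℝ)+2)) atTop atTop :=
      tendsto_atTop_add_const_right _ 2 tendsto_natCast_atTop_atTop
    have h1n : Tendsto (fun n : ℕ => ((n:ℝ)+1)) atTop atTop :=
      tendsto_atTop_add_const_right _ 1 tendsto_natCast_atTop_atTop
    have ha : Tendsto (fun n : ℕ => sSup T₁ - sSup T₁ / ((n:ℝ)+2)) atTop (nhds (sSup T₁)) := by
      have := tendsto_const_nhds (x := sSup T₁) (f := atTop (α := ℕ))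
      have h0 := Tendsto.div_atTop (this) h2n
      simpa using this.sub h0
    have hb : Tendsto (fun n : ℕ => sInf S₁ + 1 / ((n:ℝ)+1)) atTop (nhds (sInf S₁)) := by
      have h0 := Tendsto.div_atTop (tendsto_const_nhds (x := (1:ℝ)) (f := atTop (α := ℕ))) h1n
      simpa using (tendsto_const_nhds (x := sInf S₁) (f := atTop (α := ℕ))).add h0
    have hq : Tendsto (fun n : ℕ => (sInf S₁ + 1 / ((n:ℝ)+1)) / (sSup T₁ - sSup T₁ / ((n:ℝ)+2)))
        atTop (nhds (sInf S₁ / sSup T₁)) := hb.div ha hα0.ne'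
    have hcont := (Real.continuousAt_log (ne_of_gt (div_pos hβ0 hα0))).tendsto.comp hq
    exact hcont.const_mul _
  have main : d₂ ≤ (1 - Real.exp (-D)) * Real.log (sInf S₁ / sSup T₁) := by
    refine ge_of_tendsto htend₂ (Eventually.of_forall fun n => ?_)
    have hn2 : (1:ℝ) < (n:ℝ)+2 := by
      have := Nat.cast_nonneg (α := ℝ) n; linarith
    have htnlt : sSup T₁ - sSup T₁ / ((n:ℝ)+2) < sSup T₁ := by
      have : 0 < sSup T₁ / ((n:ℝ)+2) := by positivity
      linarith
    have htn0 : 0 < sSup T₁ - sSup T₁ / ((n:ℝ)+2) := by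
      have : sSup T₁ / ((n:ℝ)+2) < sSup T₁ := div_lt_self hα0 hn2
      linarith
    have htn : sSup T₁ - sSup T₁ / ((n:ℝ)+2) ∈ T₁ := by
      obtain ⟨t₁, ht₁, h⟩ := exists_lt_of_lt_csSup ⟨t₀, ht₀⟩ htnlt
      exact T_down h2₁ hv₁ ht₁ htn0 h
    have hsngt : sInf S₁ < sInf S₁ + 1 / ((n:ℝ)+1) := by
      have : 0 < 1 / ((n:ℝ)+1) := by positivity
      linarith
    have hsn : sInf S₁ + 1 / ((n:ℝ)+1) ∈ S₁ := by
      obtain ⟨s₁, hs₁, h⟩ := exists_lt_of_csInf_lt hS₁ne hsngt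
      exact S_up h2₁ hv₁ hs₁ h
    exact step1 _ htn _ hsn (lt_of_lt_of_le htnlt (hαβ.trans hsngt.le))
  rw [← hr']
  exact main
end
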